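/- arXiv:1004.1615 — 3 statements merged into one kernel-verified Lean document; each statement's English description precedes it below -/
import Mathlib

section
/- Let G be a finite group and p a prime. The number of conjugacy classes of G equals the sum, over a set U of representatives for the G-conjugacy classes of p-elements of G, of the number of C_G(u)-conjugacy classes of p-regular elements of the centralizer C_G(u). Equivalently, conjugacy classes of G are in bijection with G-orbits (under simultaneous conjugation) of pairs (u, s) where u is a p-element, s is a p'-element, and us = su. -/
namespace Stmt6Aux

variable {G : Type*} [Group G] (p : ℕ) [Fact p.Prime]

/-- `x` is a `p`-element. -/
def IsPElem (x : G) : Prop := ∃ n : ℕ, orderOf x = p ^ n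

lemma orderOf_conj' (g x : G) : orderOf (g * x * g⁻¹) = orderOf x := by
  simpa using orderOf_injective (MulAut.conj g).toMonoidHom (MulAut.conj g).injective x

lemma IsPElem.conj {x : G} (h : IsPElem p x) (g : G) : IsPElem p (g * x * g⁻¹) := by
  rwa [IsPElem, orderOf_conj']

lemma isPReg_conj {x : G} (h : (orderOf x).Coprime p) (g : G) :
    (orderOf (g * x * g⁻¹)).Coprime p := by rwa [orderOf_conj']

lemma IsPElem.inv {x : G} (h : IsPElem p x) : IsPElem p x⁻¹ := by
  rwa [IsPElem, orderOf_inv]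

lemma IsPElem.mul {x y : G} (hc : Commute x y) (hx : IsPElem p x) (hy : IsPElem p y) :
    IsPElem p (x * y) := by
  obtain ⟨n, hn⟩ := hx
  obtain ⟨m, hm⟩ := hy
  have h1 : orderOf (x * y) ∣ p ^ (max n m) := by
    refine hc.orderOf_mul_dvd_lcm.trans (Nat.lcm_dvd ?_ ?_)
    · rw [hn]; exact pow_dvd_pow p (le_max_left n m)
    · rw [hm]; exact pow_dvd_pow p (le_max_right n m)
  obtain ⟨j, -, hj⟩ := (Nat.dvd_prime_pow (Fact.out : p.Prime)).mp h1
  exact ⟨j, hj⟩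

lemma isPReg_mul {x y : G} (hc : Commute x y) (hx : (orderOf x).Coprime p)
    (hy : (orderOf y).Coprime p) : (orderOf (x * y)).Coprime p :=
  Nat.Coprime.coprime_dvd_left (hc.orderOf_mul_dvd_lcm.trans (Nat.lcm_dvd_mul _ _))
    (Nat.Coprime.mul hx hy)

lemma eq_one_of_pelem_preg {x : G} (h1 : IsPElem p x) (h2 : (orderOf x).Coprime p) : x = 1 := by
  obtain ⟨n, hn⟩ := h1
  rw [hn] at h2
  rcases Nat.eq_zero_or_pos n with rfl | hpos
  · rw [← orderOf_eq_one_iff, hn, pow_zero]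
  · exact absurd (Nat.Coprime.eq_one_of_dvd h2.symm (dvd_pow_self p hpos.ne'))
      (Fact.out : p.Prime).ne_one

/-- Existence of the `p`-primary decomposition. -/
lemma exists_decomp [Finite G] (x : G) :
    ∃ us : G × G, IsPElem p us.1 ∧ (orderOf us.2).Coprime p ∧ Commute us.1 us.2 ∧
      us.1 * us.2 = x ∧ us.1 ∈ Subgroup.zpowers x ∧ us.2 ∈ Subgroup.zpowers x := by
  have hp : p.Prime := Fact.out
  set n := orderOf x with hndef
  have hn : n ≠ 0 := (orderOf_pos x).ne'
  set k := n.factorization p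
  set m := ordCompl[p] n with hmdef
  have h1 : p ^ k * m = n := Nat.ordProj_mul_ordCompl_eq_self n p
  have hcop : (p ^ k).Coprime m := Nat.Coprime.pow_left _ (Nat.coprime_ordCompl hp hn)
  obtain ⟨e, he1, he2⟩ := Nat.chineseRemainder hcop 1 0
  obtain ⟨f, hf1, hf2⟩ := Nat.chineseRemainder hcop 0 1
  have hme : m ∣ e := Nat.modEq_zero_iff_dvd.mp he2
  have hpf : (p ^ k) ∣ f := Nat.modEq_zero_iff_dvd.mp hf1
  refine ⟨(x ^ e, x ^ f), ?_, ?_, (Commute.refl x).pow_pow e f, ?_,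
    Subgroup.mem_zpowers_iff.mpr ⟨(e : ℤ), by rw [zpow_natCast]⟩,
    Subgroup.mem_zpowers_iff.mpr ⟨(f : ℤ), by rw [zpow_natCast]⟩⟩
  · have h2 : (x ^ e) ^ (p ^ k) = 1 := by
      obtain ⟨c, rfl⟩ := hme
      rw [← pow_mul]
      exact orderOf_dvd_iff_pow_eq_one.mp (by show n ∣ _; rw [← h1]; exact ⟨c, by ring⟩)
    obtain ⟨j, -, hj⟩ := (Nat.dvd_prime_pow hp).mp (orderOf_dvd_of_pow_eq_one h2)
    exact ⟨j, hj⟩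
  · have h2 : (x ^ f) ^ m = 1 := by
      obtain ⟨c, rfl⟩ := hpf
      rw [← pow_mul]
      exact orderOf_dvd_iff_pow_eq_one.mp (by show n ∣ _; rw [← h1]; exact ⟨c, by ring⟩)
    exact Nat.Coprime.coprime_dvd_left (orderOf_dvd_of_pow_eq_one h2)
      (Nat.coprime_ordCompl hp hn).symm
  · rw [← pow_add]
    conv_rhs => rw [← pow_one x]
    refine pow_eq_pow_iff_modEq.mpr ?_
    rw [← hndef, ← h1]
    exact (Nat.modEq_and_modEq_iff_modEq_mul hcop).mp
      ⟨by simpa using Nat.ModEq.add he1 hf1, by simpa using Nat.ModEq.add he2 hf2⟩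

variable [Finite G]

/-- The canonical `p`-primary decomposition of `x`. -/
noncomputable def pdec (x : G) : G × G := (exists_decomp p x).choose

lemma pdec_spec (x : G) :
    IsPElem p (pdec p x).1 ∧ (orderOf (pdec p x).2).Coprime p ∧
      Commute (pdec p x).1 (pdec p x).2 ∧ (pdec p x).1 * (pdec p x).2 = x ∧
      (pdec p x).1 ∈ Subgroup.zpowers x ∧ (pdec p x).2 ∈ Subgroup.zpowers x :=
  (exists_decomp p x).choose_spec

/-- Any decomposition agrees with the canonical one. -/
lemma decomp_eq_pdec {x u s : G} (hu : IsPElem p u) (hs : (orderOf s).Coprime p)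
    (hc : Commute u s) (hx : u * s = x) : u = (pdec p x).1 ∧ s = (pdec p x).2 := by
  obtain ⟨h0u, h0s, h0c, h0x, hm1, hm2⟩ := pdec_spec p x
  obtain ⟨a, ha⟩ := Subgroup.mem_zpowers_iff.mp hm1
  obtain ⟨b, hb⟩ := Subgroup.mem_zpowers_iff.mp hm2
  set u₀ := (pdec p x).1
  set s₀ := (pdec p x).2
  have hxu : Commute x u := by rw [← hx]; exact (Commute.refl u).mul_left hc.symm
  have hxs : Commute x s := by rw [← hx]; exact hc.mul_left (Commute.refl s)
  have hu0u : Commute u₀ u := ha ▸ hxu.zpow_left a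
  have hu0s : Commute u₀ s := ha ▸ hxs.zpow_left a
  have hs0u : Commute s₀ u := hb ▸ hxu.zpow_left b
  have hs0s : Commute s₀ s := hb ▸ hxs.zpow_left b
  have key : u⁻¹ * u₀ = s * s₀⁻¹ := by
    have h2 : u * s = u₀ * s₀ := by rw [hx, h0x]
    have h3 : u⁻¹ * (u * s) * s₀⁻¹ = u⁻¹ * (u₀ * s₀) * s₀⁻¹ := by rw [h2]
    exact (by simpa [mul_assoc] using h3 : s * s₀⁻¹ = u⁻¹ * u₀).symm
  have htp : IsPElem p (u⁻¹ * u₀) := IsPElem.mul p hu0u.symm.inv_left (hu.inv p) h0u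
  have htr : (orderOf (u⁻¹ * u₀)).Coprime p := by
    rw [key]
    exact isPReg_mul p hs0s.symm.inv_right hs (by rwa [orderOf_inv])
  have ht1 : u⁻¹ * u₀ = 1 := eq_one_of_pelem_preg p htp htr
  refine ⟨(inv_mul_eq_one.mp ht1), ?_⟩
  rw [key] at ht1
  exact mul_inv_eq_one.mp ht1

lemma decomp_unique {x u s u' s' : G} (hu : IsPElem p u) (hs : (orderOf s).Coprime p)
    (hc : Commute u s) (hx : u * s = x) (hu' : IsPElem p u') (hs' : (orderOf s').Coprime p)
    (hc' : Commute u' s') (hx' : u' * s' = x) : u = u' ∧ s = s' := by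
  obtain ⟨e1, e2⟩ := decomp_eq_pdec p hu hs hc hx
  obtain ⟨e3, e4⟩ := decomp_eq_pdec p hu' hs' hc' hx'
  exact ⟨e1.trans e3.symm, e2.trans e4.symm⟩

/-- The canonical decomposition commutes with conjugation. -/
lemma pdec_conj (x g : G) :
    (pdec p (g * x * g⁻¹)).1 = g * (pdec p x).1 * g⁻¹ ∧
      (pdec p (g * x * g⁻¹)).2 = g * (pdec p x).2 * g⁻¹ := by
  obtain ⟨h0u, h0s, h0c, h0x, -, -⟩ := pdec_spec p x
  have hc : Commute (g * (pdec p x).1 * g⁻¹) (g * (pdec p x).2 * g⁻¹) := by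
    simpa [MulAut.conj] using h0c.map (MulAut.conj g).toMonoidHom
  have hx : (g * (pdec p x).1 * g⁻¹) * (g * (pdec p x).2 * g⁻¹) = g * x * g⁻¹ := by
    conv_rhs => rw [← h0x]
    group
  obtain ⟨e1, e2⟩ := decomp_eq_pdec p (h0u.conj p g) (isPReg_conj p h0s g) hc hx
  exact ⟨e1.symm, e2.symm⟩

lemma part2 (p : ℕ) [Fact p.Prime] (G : Type*) [Group G] [Fintype G] :
    Nat.card (ConjClasses G) =
      Nat.card {o : Quotient (MulAction.orbitRel (ConjAct G) (G × G)) //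
        ∃ u s : G, (∃ n : ℕ, orderOf u = p ^ n) ∧ Nat.Coprime (orderOf s) p ∧
          u * s = s * u ∧
          Quotient.mk (MulAction.orbitRel (ConjAct G) (G × G)) (u, s) = o} := by
  classical
  set R := MulAction.orbitRel (ConjAct G) (G × G) with hR
  set T := {o : Quotient R //
        ∃ u s : G, (∃ n : ℕ, orderOf u = p ^ n) ∧ Nat.Coprime (orderOf s) p ∧
          u * s = s * u ∧ Quotient.mk R (u, s) = o} with hT
  -- the forward map on representatives
  have f0prop : ∀ x : G, ∃ u s : G, (∃ n : ℕ, orderOf u = p ^ n) ∧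
      Nat.Coprime (orderOf s) p ∧ u * s = s * u ∧
      Quotient.mk R (u, s) = Quotient.mk R (pdec p x) := fun x =>
    ⟨(pdec p x).1, (pdec p x).2, (pdec_spec p x).1, (pdec_spec p x).2.1,
      (pdec_spec p x).2.2.1, rfl⟩
  set f0 : G → T := fun x => ⟨Quotient.mk R (pdec p x), f0prop x⟩ with hf0
  have hresp : ∀ x y : G, IsConj x y → f0 x = f0 y := by
    intro x y hxy
    obtain ⟨g, hg⟩ := isConj_iff.mp hxy
    obtain ⟨e1, e2⟩ := pdec_conj p x g
    rw [hg] at e1 e2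
    refine Subtype.ext ?_
    show Quotient.mk R (pdec p x) = Quotient.mk R (pdec p y)
    refine (Quotient.sound ?_).symm
    refine MulAction.orbitRel_apply.mpr (MulAction.mem_orbit_iff.mpr ⟨ConjAct.toConjAct g, ?_⟩)
    refine Prod.ext ?_ ?_
    · show ConjAct.toConjAct g • (pdec p x).1 = (pdec p y).1
      rw [ConjAct.toConjAct_smul, e1]
    · show ConjAct.toConjAct g • (pdec p x).2 = (pdec p y).2
      rw [ConjAct.toConjAct_smul, e2]
  set f : ConjClasses G → T := Quotient.lift f0 hresp with hf
  set g0 : T → ConjClasses G :=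
    fun t => ConjClasses.mk (t.2.choose * t.2.choose_spec.choose) with hg0
  have hgspec : ∀ t : T, (∃ n : ℕ, orderOf t.2.choose = p ^ n) ∧
      Nat.Coprime (orderOf t.2.choose_spec.choose) p ∧
      t.2.choose * t.2.choose_spec.choose = t.2.choose_spec.choose * t.2.choose ∧
      Quotient.mk R (t.2.choose, t.2.choose_spec.choose) = t.1 :=
    fun t => t.2.choose_spec.choose_spec
  have hleft : ∀ c : ConjClasses G, g0 (f c) = c := by
    refine ConjClasses.forall_isConj.mpr fun x => ?_
    set t := f0 x with ht
    obtain ⟨hu', hs', hc', hmk⟩ := hgspec t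
    have hmk2 : Quotient.mk R (t.2.choose, t.2.choose_spec.choose) =
        Quotient.mk R (pdec p x) := hmk
    obtain ⟨c, hc⟩ := MulAction.mem_orbit_iff.mp (MulAction.orbitRel_apply.mp
      (Quotient.exact hmk2))
    have h1 : ConjAct.ofConjAct c * (pdec p x).1 * (ConjAct.ofConjAct c)⁻¹ = t.2.choose := by
      have := congrArg Prod.fst hc
      simpa [ConjAct.smul_def] using this
    have h2 : ConjAct.ofConjAct c * (pdec p x).2 * (ConjAct.ofConjAct c)⁻¹ =
        t.2.choose_spec.choose := by
      have := congrArg Prod.snd hc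
      simpa [ConjAct.smul_def] using this
    show ConjClasses.mk (t.2.choose * t.2.choose_spec.choose) = ConjClasses.mk x
    refine (ConjClasses.mk_eq_mk_iff_isConj.mpr ?_).symm
    refine isConj_iff.mpr ⟨ConjAct.ofConjAct c, ?_⟩
    have hpx := (pdec_spec p x).2.2.2.1
    calc ConjAct.ofConjAct c * x * (ConjAct.ofConjAct c)⁻¹
        = (ConjAct.ofConjAct c * (pdec p x).1 * (ConjAct.ofConjAct c)⁻¹) *
          (ConjAct.ofConjAct c * (pdec p x).2 * (ConjAct.ofConjAct c)⁻¹) := by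
          conv_lhs => rw [← hpx]
          group
      _ = _ := by rw [h1, h2]
  have hright : ∀ t : T, f (g0 t) = t := by
    intro t
    obtain ⟨hu', hs', hc', hmk⟩ := hgspec t
    have hdec := decomp_eq_pdec p hu' hs' hc' rfl
    refine Subtype.ext (Eq.trans ?_ hmk)
    exact congrArg (Quotient.mk R) (Prod.ext hdec.1 hdec.2).symm
  exact Nat.card_congr ⟨f, g0, hleft, hright⟩

lemma commute_conj {G : Type*} [Group G] {a b : G} (h : Commute a b) (g : G) :
    Commute (g * a * g⁻¹) (g * b * g⁻¹) := by
  simpa [MulAut.conj] using h.map (MulAut.conj g).toMonoidHom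

lemma part1 (p : ℕ) [Fact p.Prime] (G : Type*) [Group G] [Fintype G]
    (U : Finset G)
    (hU1 : ∀ u ∈ U, ∃ n : ℕ, orderOf u = p ^ n)
    (hU2 : ∀ v : G, (∃ n : ℕ, orderOf v = p ^ n) → ∃! u, u ∈ U ∧ IsConj u v) :
    Nat.card (ConjClasses G) =
      ∑ u ∈ U,
        Nat.card {c : ConjClasses ↥(Subgroup.centralizer ({u} : Set G)) //
          ∃ s : ↥(Subgroup.centralizer ({u} : Set G)),
            Nat.Coprime (orderOf s) p ∧ ConjClasses.mk s = c} := by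
  classical
  have hFex : ∀ x : G, ∃! u, u ∈ U ∧ IsConj u (pdec p x).1 := fun x => hU2 _ (pdec_spec p x).1
  set F0 : G → {u : G // u ∈ U} := fun x => ⟨(hFex x).choose, ((hFex x).choose_spec.1).1⟩
    with hF0
  have hF0conj : ∀ x : G, IsConj (F0 x).1 (pdec p x).1 := fun x => ((hFex x).choose_spec.1).2
  have hF0uniq : ∀ x : G, ∀ u, u ∈ U → IsConj u (pdec p x).1 → u = (F0 x).1 :=
    fun x u h1 h2 => (hFex x).choose_spec.2 u ⟨h1, h2⟩
  have hresp : ∀ x y : G, IsConj x y → F0 x = F0 y := by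
    intro x y hxy
    obtain ⟨g, hg⟩ := isConj_iff.mp hxy
    have e1 := (pdec_conj p x g).1
    rw [hg] at e1
    refine Subtype.ext (hF0uniq y (F0 x).1 (F0 x).2 ?_)
    exact (hF0conj x).trans (isConj_iff.mpr ⟨g, e1.symm⟩)
  set F : ConjClasses G → {u : G // u ∈ U} := Quotient.lift F0 hresp with hF
  have hFmk : ∀ x : G, F (ConjClasses.mk x) = F0 x := fun x => rfl
  -- split the count into fibers of F
  have e1 : Nat.card (ConjClasses G) =
      ∑ v : {u : G // u ∈ U}, Nat.card {c : ConjClasses G // F c = v} := by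
    letI : Fintype (ConjClasses G) := Fintype.ofFinite _
    rw [← Nat.card_congr (Equiv.sigmaFiberEquiv F)]
    letI : ∀ v : {u : G // u ∈ U}, Fintype {c : ConjClasses G // F c = v} :=
      fun v => Fintype.ofFinite _
    simp [Nat.card_eq_fintype_card]
  rw [e1, ← Finset.sum_coe_sort U (fun u => Nat.card
      {c : ConjClasses ↥(Subgroup.centralizer ({u} : Set G)) //
        ∃ s : ↥(Subgroup.centralizer ({u} : Set G)),
          Nat.Coprime (orderOf s) p ∧ ConjClasses.mk s = c})]
  refine Finset.sum_congr rfl fun v _ => ?_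
  -- now fix a representative u
  obtain ⟨u, hu⟩ := v
  have hupe : IsPElem p u := hU1 u hu
  set C := Subgroup.centralizer ({u} : Set G) with hC
  have hcomm : ∀ s : ↥C, Commute u (s : G) :=
    fun s => (Subgroup.mem_centralizer_singleton_iff.mp s.2).symm
  have horder : ∀ s : ↥C, orderOf (s : G) = orderOf s :=
    fun s => orderOf_injective C.subtype Subtype.coe_injective s
  -- the key conjugacy transfer
  have key : ∀ s₁ s₂ : ↥C, (orderOf s₁).Coprime p → (orderOf s₂).Coprime p →
      (ConjClasses.mk (u * (s₁ : G)) = ConjClasses.mk (u * (s₂ : G)) ↔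
        ConjClasses.mk s₁ = ConjClasses.mk s₂) := by
    intro s₁ s₂ hs₁ hs₂
    constructor
    · intro h
      obtain ⟨g, hg⟩ := isConj_iff.mp (ConjClasses.mk_eq_mk_iff_isConj.mp h)
      have hx1 : (g * u * g⁻¹) * (g * (s₁ : G) * g⁻¹) = u * (s₂ : G) := by
        rw [← hg]; group
      obtain ⟨eu, es⟩ := decomp_unique p (hupe.conj p g)
        (by rw [orderOf_conj', horder]; exact hs₁) (commute_conj (hcomm s₁) g) hx1
        hupe (by rw [horder]; exact hs₂) (hcomm s₂) rfl
      have hgC : g ∈ C := Subgroup.mem_centralizer_singleton_iff.mpr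
        (mul_inv_eq_iff_eq_mul.mp eu)
      refine ConjClasses.mk_eq_mk_iff_isConj.mpr (isConj_iff.mpr ⟨⟨g, hgC⟩, ?_⟩)
      refine Subtype.ext ?_
      push_cast
      exact es
    · intro h
      obtain ⟨c, hc⟩ := isConj_iff.mp (ConjClasses.mk_eq_mk_iff_isConj.mp h)
      refine ConjClasses.mk_eq_mk_iff_isConj.mpr (isConj_iff.mpr ⟨(c : G), ?_⟩)
      have hcval : (c : G) * (s₁ : G) * (c : G)⁻¹ = (s₂ : G) := by
        exact_mod_cast congrArg (Subtype.val) hc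
      have hcu : (c : G) * u * (c : G)⁻¹ = u :=
        mul_inv_eq_iff_eq_mul.mpr (hcomm c).symm.eq
      conv_rhs => rw [← hcval, ← hcu]
      group
  -- F sends the class of u * s to u
  have Fkey : ∀ s : ↥C, (orderOf s).Coprime p →
      F (ConjClasses.mk (u * (s : G))) = ⟨u, hu⟩ := by
    intro s hs
    have hdec := decomp_eq_pdec p hupe (by rw [horder]; exact hs) (hcomm s) rfl
    have hconj : IsConj u (pdec p (u * (s : G))).1 := hdec.1 ▸ IsConj.refl u
    rw [hFmk]
    exact Subtype.ext (hF0uniq _ u hu hconj).symm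
  set S := {c : ConjClasses ↥C // ∃ s : ↥C, (orderOf s).Coprime p ∧ ConjClasses.mk s = c}
    with hS
  set β : S → {c : ConjClasses G // F c = ⟨u, hu⟩} :=
    fun t => ⟨ConjClasses.mk (u * (t.2.choose : G)), Fkey _ t.2.choose_spec.1⟩ with hβ
  have hβinj : Function.Injective β := by
    intro t₁ t₂ h
    have h1 := t₁.2.choose_spec
    have h2 := t₂.2.choose_spec
    have h3 := (key _ _ h1.1 h2.1).mp (congrArg Subtype.val h)
    exact Subtype.ext (by rw [← h1.2, ← h2.2]; exact h3)
  have hβsurj : Function.Surjective β := by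
    rintro ⟨c, hFc⟩
    obtain ⟨x, rfl⟩ := ConjClasses.exists_rep c
    have hval : ((F0 x : {u : G // u ∈ U}) : G) = u := congrArg Subtype.val hFc
    obtain ⟨g, hg⟩ := isConj_iff.mp (hval ▸ hF0conj x)
    obtain ⟨h0u, h0s, h0c, h0x, -, -⟩ := pdec_spec p x
    have hu' : g⁻¹ * (pdec p x).1 * g = u := by rw [← hg]; group
    have hmem : g⁻¹ * (pdec p x).2 * g ∈ C := by
      refine Subgroup.mem_centralizer_singleton_iff.mpr ?_
      have h := commute_conj h0c g⁻¹
      rw [inv_inv] at h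
      rw [hu'] at h
      exact h.symm.eq
    have hσord0 : (orderOf (g⁻¹ * (pdec p x).2 * g)).Coprime p := by
      have h := isPReg_conj p h0s g⁻¹
      rwa [inv_inv] at h
    set σ : ↥C := ⟨g⁻¹ * (pdec p x).2 * g, hmem⟩ with hσ
    have hσord : (orderOf σ).Coprime p := by rw [← horder σ]; exact hσord0
    have hxus : ConjClasses.mk (u * (σ : G)) = ConjClasses.mk x := by
      refine ConjClasses.mk_eq_mk_iff_isConj.mpr (isConj_iff.mpr ⟨g, ?_⟩)
      calc g * (u * (σ : G)) * g⁻¹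
          = g * ((g⁻¹ * (pdec p x).1 * g) * (g⁻¹ * (pdec p x).2 * g)) * g⁻¹ := by
            show g * (u * (g⁻¹ * (pdec p x).2 * g)) * g⁻¹ = _
            rw [hu']
        _ = (pdec p x).1 * (pdec p x).2 := by group
        _ = x := h0x
    refine ⟨⟨ConjClasses.mk σ, σ, hσord, rfl⟩, Subtype.ext ?_⟩
    set t : S := ⟨ConjClasses.mk σ, σ, hσord, rfl⟩ with ht
    have hch := t.2.choose_spec
    show ConjClasses.mk (u * (t.2.choose : G)) = ConjClasses.mk x
    exact ((key _ _ hch.1 hσord).mpr hch.2).trans hxus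
  exact (Nat.card_congr (Equiv.ofBijective β ⟨hβinj, hβsurj⟩)).symm

end Stmt6Aux


/-- The number of conjugacy classes of a finite group `G` equals the
sum, over a set `U` of representatives of the conjugacy classes of `p`-elements,
of the number of classes of `p`-regular elements of the centralizer `C_G(u)`;
equivalently, conjugacy classes of `G` biject with `G`-conjugation orbits of
commuting pairs `(u, s)` with `u` a `p`-element and `s` a `p'`-element. -/
theorem stmt6 (p : ℕ) [Fact p.Prime] (G : Type*) [Group G] [Fintype G]
    (U : Finset G)
    (hU1 : ∀ u ∈ U, ∃ n : ℕ, orderOf u = p ^ n)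
    (hU2 : ∀ v : G, (∃ n : ℕ, orderOf v = p ^ n) → ∃! u, u ∈ U ∧ IsConj u v) :
    (Nat.card (ConjClasses G) =
      ∑ u ∈ U,
        Nat.card {c : ConjClasses ↥(Subgroup.centralizer ({u} : Set G)) //
          ∃ s : ↥(Subgroup.centralizer ({u} : Set G)),
            Nat.Coprime (orderOf s) p ∧ ConjClasses.mk s = c}) ∧
    (Nat.card (ConjClasses G) =
      Nat.card {o : Quotient (MulAction.orbitRel (ConjAct G) (G × G)) //
        ∃ u s : G, (∃ n : ℕ, orderOf u = p ^ n) ∧ Nat.Coprime (orderOf s) p ∧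
          u * s = s * u ∧
          Quotient.mk (MulAction.orbitRel (ConjAct G) (G × G)) (u, s) = o}) := by
  exact ⟨Stmt6Aux.part1 p G U hU1 hU2, Stmt6Aux.part2 p G⟩
end

section
/- Let Q be a finite p-group, A a proper subgroup of Q, and B any subgroup of Q. Then p divides the cardinality of the set X = { Aw : w ∈ Q, wBw⁻¹ ⊆ A } of right cosets of A in Q whose representatives conjugate B into A. (In particular, if X is nonempty then it has at least p elements.) -/
/-- Let `Q` be a finite `p`-group, `A < Q` a proper subgroup and
`B ≤ Q`.  Then `p` divides the number of right cosets `Aw` of `A` in `Q` whose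
representative conjugates `B` into `A`; in particular if such a coset exists
there are at least `p` of them. -/
theorem stmt11 (p : ℕ) [Fact p.Prime] (Q : Type*) [Group Q] [Fintype Q]
    (hQ : IsPGroup p Q) (A B : Subgroup Q) (hA : A < ⊤) :
    p ∣ Nat.card {C : Set Q | ∃ w : Q,
        (∀ b ∈ B, w * b * w⁻¹ ∈ A) ∧ C = {x : Q | ∃ a ∈ A, x = a * w}} ∧
      (({C : Set Q | ∃ w : Q,
          (∀ b ∈ B, w * b * w⁻¹ ∈ A) ∧ C = {x : Q | ∃ a ∈ A, x = a * w}}).Nonempty →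
        p ≤ Nat.card {C : Set Q | ∃ w : Q,
          (∀ b ∈ B, w * b * w⁻¹ ∈ A) ∧ C = {x : Q | ∃ a ∈ A, x = a * w}}) := by
  classical
  have hp : p.Prime := Fact.out
  haveI : NeZero p := ⟨hp.ne_zero⟩
  haveI : Fact (1 < p) := ⟨hp.one_lt⟩
  set X : Set (Set Q) := {C : Set Q | ∃ w : Q,
      (∀ b ∈ B, w * b * w⁻¹ ∈ A) ∧ C = {x : Q | ∃ a ∈ A, x = a * w}} with hXdef
  suffices hdvd : p ∣ Nat.card X by
    refine ⟨hdvd, fun hne => ?_⟩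
    haveI : Nonempty X := Set.nonempty_coe_sort.mpr hne
    exact Nat.le_of_dvd Nat.card_pos hdvd
  -- Step 1: find `n` in the normalizer of `A` with `n ^ j ∈ A ↔ p ∣ j`.
  haveI : Finite Q := Finite.of_fintype Q
  have hnc : NormalizerCondition Q := by
    haveI := hQ.isNilpotent
    exact normalizerCondition_of_isNilpotent
  have hAN : A < Subgroup.normalizer (A : Set Q) := hnc A hA
  set N := Subgroup.normalizer (A : Set Q) with hN
  set A' : Subgroup N := A.subgroupOf N with hA'
  haveI : A'.Normal := Subgroup.normal_in_normalizer
  have hq : IsPGroup p (N ⧸ A') := (hQ.to_subgroup N).to_quotient A'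
  obtain ⟨m, hmN, hmA⟩ := SetLike.exists_of_lt hAN
  set g : N ⧸ A' := QuotientGroup.mk ⟨m, hmN⟩ with hg
  have hg1 : g ≠ 1 := by
    intro h
    have := (QuotientGroup.eq_one_iff (⟨m, hmN⟩ : N)).mp h
    exact hmA (Subgroup.mem_subgroupOf.mp this)
  obtain ⟨k, hk⟩ := IsPGroup.iff_orderOf.mp hq g
  have hk0 : k ≠ 0 := by
    rintro rfl
    exact hg1 (orderOf_eq_one_iff.mp (by simpa using hk))
  set nN : N := (⟨m, hmN⟩ : N) ^ (p ^ (k - 1)) with hnN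
  have hmkn : (QuotientGroup.mk nN : N ⧸ A') = g ^ (p ^ (k - 1)) := rfl
  have horder : orderOf (QuotientGroup.mk nN : N ⧸ A') = p := by
    rw [hmkn]
    refine orderOf_eq_prime ?_ ?_
    · rw [← pow_mul, ← pow_succ, Nat.sub_add_cancel (Nat.one_le_iff_ne_zero.mpr hk0), ← hk]
      exact pow_orderOf_eq_one g
    · intro h
      have hdvd' : orderOf g ∣ p ^ (k - 1) := orderOf_dvd_of_pow_eq_one h
      rw [hk] at hdvd'
      have := Nat.le_of_dvd (Nat.pow_pos (n := k - 1) hp.pos) hdvd'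
      have hlt : p ^ (k - 1) < p ^ k := Nat.pow_lt_pow_right hp.one_lt (Nat.sub_lt (Nat.pos_of_ne_zero hk0) one_pos)
      omega
  set n : Q := (nN : Q) with hn
  have hnNmem : n ∈ Subgroup.normalizer (A : Set Q) := nN.2
  have hnpow : ∀ j : ℕ, n ^ j ∈ A ↔ p ∣ j := by
    intro j
    have h1 : n ^ j ∈ A ↔ nN ^ j ∈ A' := by
      rw [hA', Subgroup.mem_subgroupOf]
      push_cast
      rfl
    rw [h1, ← QuotientGroup.eq_one_iff (nN ^ j), QuotientGroup.mk_pow, ← orderOf_dvd_iff_pow_eq_one, horder]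
  -- Step 2: translation of right cosets by normalizer elements
  have key : ∀ g w : Q, g ∈ Subgroup.normalizer (A : Set Q) →
      ((g * ·) '' {x : Q | ∃ a ∈ A, x = a * w}) = {x : Q | ∃ a ∈ A, x = a * (g * w)} := by
    intro g w hgmem
    ext x
    simp only [Set.mem_image, Set.mem_setOf_eq]
    constructor
    · rintro ⟨y, ⟨a, ha, rfl⟩, rfl⟩
      exact ⟨g * a * g⁻¹, (Subgroup.mem_normalizer_iff.mp hgmem a).mp ha, by group⟩
    · rintro ⟨a, ha, rfl⟩
      refine ⟨(g⁻¹ * a * g) * w, ⟨g⁻¹ * a * g, ?_, rfl⟩, by group⟩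
      have := (Subgroup.mem_normalizer_iff.mp (inv_mem hgmem) a).mp ha
      rwa [inv_inv] at this
  set act : ℕ → Set Q → Set Q := fun j C => (n ^ j * ·) '' C with hact
  have act_add : ∀ (i j : ℕ) (C : Set Q), act (i + j) C = act i (act j C) := by
    intro i j C
    simp only [hact, Set.image_image]
    apply Set.image_congr'
    intro x
    rw [pow_add, mul_assoc]
  have smul_mem : ∀ (j : ℕ), ∀ C ∈ X, act j C ∈ X := by
    rintro j C ⟨w, hw, rfl⟩
    refine ⟨n ^ j * w, ?_, (key _ _ (pow_mem hnNmem j))⟩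
    intro b hb
    have h2 := (Subgroup.mem_normalizer_iff.mp (pow_mem hnNmem j) _).mp (hw b hb)
    convert h2 using 1
    group
  have smul_eq_self : ∀ (j : ℕ), ∀ C ∈ X, p ∣ j → act j C = C := by
    rintro j C ⟨w, hw, rfl⟩ hj
    rw [hact]
    simp only
    rw [key _ _ (pow_mem hnNmem j)]
    have hjA : n ^ j ∈ A := (hnpow j).mpr hj
    ext x
    simp only [Set.mem_setOf_eq]
    constructor
    · rintro ⟨a, ha, rfl⟩
      exact ⟨a * n ^ j, mul_mem ha hjA, by group⟩
    · rintro ⟨a, ha, rfl⟩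
      exact ⟨a * (n ^ j)⁻¹, mul_mem ha (inv_mem hjA), by group⟩
  have fix_imp : ∀ (j : ℕ), ∀ C ∈ X, act j C = C → p ∣ j := by
    rintro j C ⟨w, hw, rfl⟩ hfix
    rw [hact] at hfix
    simp only at hfix
    rw [key _ _ (pow_mem hnNmem j)] at hfix
    have hw' : w ∈ {x : Q | ∃ a ∈ A, x = a * w} := ⟨1, one_mem A, (one_mul w).symm⟩
    rw [← hfix] at hw'
    obtain ⟨a, ha, hw2⟩ := hw'
    have h3 : a * n ^ j = 1 := by
      have h4 : (a * n ^ j) * w = 1 * w := by rw [one_mul, mul_assoc]; exact hw2.symm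
      exact mul_right_cancel h4
    have h5 : n ^ j = a⁻¹ := by
      rw [← one_mul (n ^ j), ← inv_mul_cancel a, mul_assoc, h3, mul_one]
    exact (hnpow j).mp (h5 ▸ inv_mem ha)
  -- Step 3: the action of `Multiplicative (ZMod p)` on `X`
  letI : SMul (Multiplicative (ZMod p)) X :=
    ⟨fun k C => ⟨act (Multiplicative.toAdd k).val C.1, smul_mem _ _ C.2⟩⟩
  have smul_def : ∀ (k : Multiplicative (ZMod p)) (C : X),
      (k • C : X).1 = act (Multiplicative.toAdd k).val C.1 := fun _ _ => rfl
  letI : MulAction (Multiplicative (ZMod p)) X :=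
    { one_smul := by
        intro C
        apply Subtype.ext
        rw [smul_def]
        exact smul_eq_self _ _ C.2 (by simp)
      mul_smul := by
        intro k l C
        apply Subtype.ext
        rw [smul_def, smul_def, smul_def]
        have hval : (Multiplicative.toAdd k).val + (Multiplicative.toAdd l).val =
            (Multiplicative.toAdd (k * l)).val
              + p * (((Multiplicative.toAdd k).val + (Multiplicative.toAdd l).val) / p) := by
          have : Multiplicative.toAdd (k * l) = Multiplicative.toAdd k + Multiplicative.toAdd l := rfl
          rw [this, ZMod.val_add]
          exact (Nat.mod_add_div _ _).symm
        rw [← act_add, hval, act_add, smul_eq_self _ _ C.2 ⟨_, rfl⟩] }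
  -- Step 4: no fixed points
  have hfixempty : MulAction.fixedPoints (Multiplicative (ZMod p)) X = ∅ := by
    ext C
    simp only [MulAction.mem_fixedPoints, Set.mem_empty_iff_false, iff_false]
    intro hC
    have h1 := hC (Multiplicative.ofAdd (1 : ZMod p))
    have h2 : act (ZMod.val (Multiplicative.toAdd (Multiplicative.ofAdd (1 : ZMod p)))) C.1 = C.1 :=
      congrArg Subtype.val h1
    have h3 := fix_imp _ _ C.2 h2
    simp only [toAdd_ofAdd, ZMod.val_one] at h3
    have h4 := Nat.le_of_dvd one_pos h3
    have h5 := hp.one_lt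
    omega
  have hPG : IsPGroup p (Multiplicative (ZMod p)) := by
    apply IsPGroup.of_card (n := 1)
    simp [Nat.card_eq_of_bijective _ (Multiplicative.toAdd (α := ZMod p)).bijective, Nat.card_zmod]
  have hmod := hPG.card_modEq_card_fixedPoints X
  rw [hfixempty] at hmod
  simpa [Nat.modEq_zero_iff_dvd] using hmod
end

section
/- Let C be a small category and m: C → Cat a functor ('representation') such that for every object C of C the category m(C) is discrete (it has no morphisms other than identities). Let m⋊C denote the Grothendieck construction (semidirect product category), whose objects are pairs (X, C) with X an object of m(C), and whose morphisms (X, C) → (X', C') are morphisms f: C → C' in C with m(f)(X) = X'. Let a: (m⋊C)^op → Ab be a contravariant functor, and define a^m: C^op → Ab by a^m(C) = ∏_X a(X, C) (product over objects X of m(C)), with the evident induced maps. Then for every n ≥ 0, the cohomology groups of the two categories agree: H^n(m⋊C, a) ≅ H^n(C, a^m), where H^n of a small category D with coefficients in a contravariant functor b: D^op → Ab is the n-th cohomology of the cochain complex whose n-cochains are ∏_{q} b(q(0)), the product running over all functors q: [n] → D from the linearly ordered set [n] = {0 < 1 < ⋯ < n}, with the usual simplicial differential. -/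
open CategoryTheory

universe w v u

/-- A coefficient system on a category `D`: the data of a contravariant functor
from `D` to abelian groups (functoriality is stated separately as
`CoefSys.IsFunctorial`). -/
structure CoefSys (D : Type u) [Category.{v} D] where
  /-- the abelian group attached to each object -/
  A : D → Type w
  /-- the group structures -/
  [inst : ∀ X : D, AddCommGroup (A X)]
  /-- the contravariantly induced maps -/
  map : ∀ {X Y : D}, (X ⟶ Y) → (A Y →+ A X)

attribute [instance] CoefSys.inst

/-- Functoriality of a coefficient system, i.e. being a contravariant functor
`Dᵒᵖ → Ab`. -/
def CoefSys.IsFunctorial {D : Type u} [Category.{v} D] (a : CoefSys.{w} D) : Prop :=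
  (∀ X : D, a.map (𝟙 X) = AddMonoidHom.id _) ∧
    ∀ {X Y Z : D} (f : X ⟶ Y) (g : Y ⟶ Z), a.map (f ≫ g) = (a.map f).comp (a.map g)

/-- The group of `n`-cochains of a small category `D` with coefficients in `a`:
the product, over all `n`-chains `q : [n] ⥤ D` (where `[n] = {0 < ⋯ < n}`), of
the coefficient group at `q 0`. -/
def Cochain {D : Type u} [Category.{v} D] (a : CoefSys.{w} D) (n : ℕ) :
    Type (max u v w) :=
  ∀ q : Fin (n + 1) ⥤ D, a.A (q.obj 0)

noncomputable instance {D : Type u} [Category.{v} D] (a : CoefSys.{w} D) (n : ℕ) :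
    AddCommGroup (Cochain a n) :=
  inferInstanceAs (AddCommGroup (∀ q : Fin (n + 1) ⥤ D, a.A (q.obj 0)))

/-- The `i`-th coface map `[n] → [n+1]`, skipping the vertex `i`, as a functor
between the associated poset categories. -/
def coface {n : ℕ} (i : Fin (n + 2)) : (Fin (n + 1)) ⥤ (Fin (n + 2)) :=
  (Fin.succAboveOrderEmb i).monotone.functor

/-- The usual simplicial differential of the cochain complex of a small
category with coefficients in a contravariant functor: the alternating sum of
the face maps, the `0`-th term being transported along the coefficient map of
`q(0 • 1)`. -/
noncomputable def cochainD {D : Type u} [Category.{v} D] (a : CoefSys.{w} D) (n : ℕ) :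
    Cochain a n →+ Cochain a (n + 1) :=
  AddMonoidHom.mk'
    (fun c r => ∑ i : Fin (n + 2),
      ((-1 : ℤ) ^ (i : ℕ)) •
        a.map (r.map (homOfLE (Fin.zero_le (Fin.succAboveOrderEmb i 0))))
          (c (coface i ⋙ r)))
    (by
      intro c c'
      funext r
      show (∑ i : Fin (n + 2), (_ : a.A (r.obj 0))) = (∑ i : Fin (n + 2), (_ : a.A (r.obj 0))) +
        (∑ i : Fin (n + 2), (_ : a.A (r.obj 0)))
      rw [← Finset.sum_add_distrib]
      refine Finset.sum_congr rfl fun i _ => ?_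
      rw [show (c + c') (coface i ⋙ r) =
          c (coface i ⋙ r) + c' (coface i ⋙ r) from rfl]
      exact (congrArg (((-1 : ℤ) ^ (i : ℕ)) • ·) (map_add _ _ _)).trans (smul_add _ _ _))

/-- The cohomology of a small category with coefficients in a (contravariant)
coefficient system, computed from the cochain complex above: `H⁰` is the kernel
of `d⁰` and `Hⁿ⁺¹` is the kernel of `dⁿ⁺¹` modulo the image of `dⁿ`. -/
noncomputable def catCohomology {D : Type u} [Category.{v} D] (a : CoefSys.{w} D) :
    ℕ → Type (max u v w)
  | 0 => ↥(cochainD a 0).ker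
  | (n + 1) => ↥(cochainD a (n + 1)).ker ⧸
      ((cochainD a n).range.addSubgroupOf (cochainD a (n + 1)).ker)

noncomputable instance {D : Type u} [Category.{v} D] (a : CoefSys.{w} D) :
    ∀ n : ℕ, AddCommGroup (catCohomology a n)
  | 0 => inferInstanceAs (AddCommGroup ↥(cochainD a 0).ker)
  | (n + 1) => inferInstanceAs (AddCommGroup (↥(cochainD a (n + 1)).ker ⧸
      ((cochainD a n).range.addSubgroupOf (cochainD a (n + 1)).ker)))

/-- The coefficient system `a^m` on `C` obtained from a coefficient system `a`
on the Grothendieck construction `m ⋊ C`: its value at `c` is the product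
`∏_X a (X, c)` over the objects `X` of `m c`, with the evident induced maps. -/
noncomputable def prodCoef {C : Type u} [Category.{u} C] (m : C ⥤ Cat.{u, u})
    (a : CoefSys.{w} (Grothendieck m)) : CoefSys.{max u w} C where
  A c := ∀ X : (m.obj c), a.A ⟨c, X⟩
  map {c c'} f := AddMonoidHom.mk'
    (fun g X => a.map
      (show (⟨c, X⟩ : Grothendieck m) ⟶ ⟨c', (m.map f).toFunctor.obj X⟩ from ⟨f, 𝟙 _⟩)
      (g ((m.map f).toFunctor.obj X)))
    (by intro g g'; funext X; simp)

section Aux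
variable {C : Type u} [Category.{u} C] {m : C ⥤ Cat.{u, u}}

theorem fib_subsingleton (hd1 : ∀ (c : C) (X Y : ↑(m.obj c)), (X ⟶ Y) → X = Y)
    (hd2 : ∀ (c : C) (X : ↑(m.obj c)) (φ : X ⟶ X), φ = 𝟙 X)
    {c : C} {A B : ↑(m.obj c)} (φ ψ : A ⟶ B) : φ = ψ := by
  have h := hd1 c A B φ
  subst h
  rw [hd2 c A φ, hd2 c A ψ]

theorem groHomExt (hd1 : ∀ (c : C) (X Y : ↑(m.obj c)), (X ⟶ Y) → X = Y)
    (hd2 : ∀ (c : C) (X : ↑(m.obj c)) (φ : X ⟶ X), φ = 𝟙 X)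
    {P Q : Grothendieck m} (f g : P ⟶ Q) (h : f.base = g.base) : f = g :=
  Grothendieck.ext f g h (fib_subsingleton hd1 hd2 _ _)

variable (m) in
def liftF {k : ℕ} (q : Fin (k + 1) ⥤ C) (X : ↑(m.obj (q.obj 0))) (i : Fin (k + 1)) :
    ↑(m.obj (q.obj i)) :=
  (m.map (q.map (homOfLE (Fin.zero_le i)))).toFunctor.obj X

theorem liftF_map {k : ℕ} (q : Fin (k + 1) ⥤ C) (X : ↑(m.obj (q.obj 0)))
    {i j : Fin (k + 1)} (f : i ⟶ j) :
    (m.map (q.map f)).toFunctor.obj (liftF m q X i) = liftF m q X j := by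
  have h : q.map (homOfLE (Fin.zero_le i)) ≫ q.map f = q.map (homOfLE (Fin.zero_le j)) := by
    rw [← q.map_comp]
    congr 1
  calc (m.map (q.map f)).toFunctor.obj ((m.map (q.map (homOfLE (Fin.zero_le i)))).toFunctor.obj X)
      = (m.map (q.map (homOfLE (Fin.zero_le i)) ≫ q.map f)).toFunctor.obj X := by rw [m.map_comp]; rfl
    _ = liftF m q X j := by rw [h]; rfl

theorem liftF_zero {k : ℕ} (q : Fin (k + 1) ⥤ C) (X : ↑(m.obj (q.obj 0))) :
    liftF m q X 0 = X := by
  have h : homOfLE (Fin.zero_le (0 : Fin (k + 1))) = 𝟙 (0 : Fin (k + 1)) :=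
    Subsingleton.elim _ _
  rw [liftF, h, q.map_id, m.map_id]
  rfl

variable (m) in
def lift (hd1 : ∀ (c : C) (X Y : ↑(m.obj c)), (X ⟶ Y) → X = Y)
    (hd2 : ∀ (c : C) (X : ↑(m.obj c)) (φ : X ⟶ X), φ = 𝟙 X)
    {k : ℕ} (q : Fin (k + 1) ⥤ C) (X : ↑(m.obj (q.obj 0))) :
    Fin (k + 1) ⥤ Grothendieck m where
  obj i := ⟨q.obj i, liftF m q X i⟩
  map f := ⟨q.map f, eqToHom (liftF_map q X f)⟩
  map_id i := groHomExt hd1 hd2 _ _ (by simp)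
  map_comp f g := groHomExt hd1 hd2 _ _ (by simp)

theorem lift_unique (hd1 : ∀ (c : C) (X Y : ↑(m.obj c)), (X ⟶ Y) → X = Y)
    (hd2 : ∀ (c : C) (X : ↑(m.obj c)) (φ : X ⟶ X), φ = 𝟙 X)
    {k : ℕ} (Q : Fin (k + 1) ⥤ Grothendieck m) :
    lift m hd1 hd2 (Q ⋙ Grothendieck.forget m) ((Q.obj 0).fiber) = Q := by
  have hobj : ∀ i, (lift m hd1 hd2 (Q ⋙ Grothendieck.forget m) ((Q.obj 0).fiber)).obj i
      = Q.obj i := by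
    intro i
    have hfib : liftF m (Q ⋙ Grothendieck.forget m) ((Q.obj 0).fiber) i = (Q.obj i).fiber :=
      hd1 _ _ _ ((Q.map (homOfLE (Fin.zero_le i))).fiber)
    show (⟨(Q.obj i).base, _⟩ : Grothendieck m) = Q.obj i
    rw [hfib]
  refine CategoryTheory.Functor.ext hobj ?_
  intro i j f
  apply groHomExt hd1 hd2
  rw [Grothendieck.eqToHom_eq, Grothendieck.eqToHom_eq]
  simp only [Grothendieck.comp_base, eqToHom_refl, Category.comp_id, Category.id_comp]
  simp [lift]
  erw [eqToHom_refl, eqToHom_refl, Category.id_comp, Category.comp_id]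
end Aux

section Main
variable {C : Type u} [Category.{u} C] {m : C ⥤ Cat.{u, u}}

noncomputable def Psi (a : CoefSys.{w} (Grothendieck m)) (k : ℕ) :
    Cochain (prodCoef m a) k →+ Cochain a k :=
  AddMonoidHom.mk' (fun c Q => c (Q ⋙ Grothendieck.forget m) ((Q.obj 0).fiber))
    (by intro c c'; rfl)

theorem cochain_cast (a : CoefSys.{w} (Grothendieck m)) {k : ℕ} (c : Cochain a k)
    {P Q : Fin (k + 1) ⥤ Grothendieck m} (h : P = Q) :
    c P = cast (by rw [h]) (c Q) := by subst h; rfl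

theorem Psi_inj (hd1 : ∀ (c : C) (X Y : ↑(m.obj c)), (X ⟶ Y) → X = Y)
    (hd2 : ∀ (c : C) (X : ↑(m.obj c)) (φ : X ⟶ X), φ = 𝟙 X)
    (a : CoefSys.{w} (Grothendieck m)) (k : ℕ) : Function.Injective (Psi a k) := by
  intro c c' h
  funext q X
  have h2 : c q (liftF m q X 0) = c' q (liftF m q X 0) :=
    congrFun h (lift m hd1 hd2 q X)
  rw [liftF_zero] at h2
  exact h2

theorem Psi_surj (hd1 : ∀ (c : C) (X Y : ↑(m.obj c)), (X ⟶ Y) → X = Y)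
    (hd2 : ∀ (c : C) (X : ↑(m.obj c)) (φ : X ⟶ X), φ = 𝟙 X)
    (a : CoefSys.{w} (Grothendieck m)) (k : ℕ) : Function.Surjective (Psi a k) := by
  intro c
  refine ⟨fun q X => cast (congrArg (fun Y => a.A ⟨q.obj 0, Y⟩) (liftF_zero q X))
      (c (lift m hd1 hd2 q X)), ?_⟩
  funext Q
  show cast _ (c (lift m hd1 hd2 (Q ⋙ Grothendieck.forget m) ((Q.obj 0).fiber))) = c Q
  rw [cochain_cast a c (lift_unique hd1 hd2 Q)]
  exact (cast_cast _ _ _).trans (cast_eq _ _)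

noncomputable def PsiEquiv (hd1 : ∀ (c : C) (X Y : ↑(m.obj c)), (X ⟶ Y) → X = Y)
    (hd2 : ∀ (c : C) (X : ↑(m.obj c)) (φ : X ⟶ X), φ = 𝟙 X)
    (a : CoefSys.{w} (Grothendieck m)) (k : ℕ) : Cochain (prodCoef m a) k ≃+ Cochain a k :=
  AddEquiv.ofBijective (Psi a k) ⟨Psi_inj hd1 hd2 a k, Psi_surj hd1 hd2 a k⟩

theorem key (a : CoefSys.{w} (Grothendieck m)) {c₀ c₁ : C} (b : c₀ ⟶ c₁) (X₀ : ↑(m.obj c₀))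
    (Y : ↑(m.obj c₁)) (h : (m.map b).toFunctor.obj X₀ = Y) (g : ∀ Z : ↑(m.obj c₁), a.A ⟨c₁, Z⟩) :
    a.map (show (⟨c₀, X₀⟩ : Grothendieck m) ⟶ ⟨c₁, Y⟩ from ⟨b, eqToHom h⟩) (g Y)
      = a.map (show (⟨c₀, X₀⟩ : Grothendieck m) ⟶ ⟨c₁, (m.map b).toFunctor.obj X₀⟩ from ⟨b, 𝟙 _⟩)
          (g ((m.map b).toFunctor.obj X₀)) := by subst h; rfl

theorem Psi_comm (hd1 : ∀ (c : C) (X Y : ↑(m.obj c)), (X ⟶ Y) → X = Y)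
    (hd2 : ∀ (c : C) (X : ↑(m.obj c)) (φ : X ⟶ X), φ = 𝟙 X)
    (a : CoefSys.{w} (Grothendieck m)) (k : ℕ) (c : Cochain (prodCoef m a) k) :
    Psi a (k + 1) (cochainD (prodCoef m a) k c) = cochainD a k (Psi a k c) := by
  funext R
  show (∑ i : Fin (k + 2), ((-1 : ℤ) ^ (i : ℕ)) •
      (prodCoef m a).map ((R ⋙ Grothendieck.forget m).map
        (homOfLE (Fin.zero_le (Fin.succAboveOrderEmb i 0))))
        (c (coface i ⋙ (R ⋙ Grothendieck.forget m)))) ((R.obj 0).fiber)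
    = ∑ i : Fin (k + 2), ((-1 : ℤ) ^ (i : ℕ)) •
        a.map (R.map (homOfLE (Fin.zero_le (Fin.succAboveOrderEmb i 0))))
          ((Psi a k c) (coface i ⋙ R))
  refine (Finset.sum_apply _ _ _).trans ?_
  refine Finset.sum_congr rfl fun i _ => ?_
  refine (Pi.smul_apply _ _ _).trans ?_
  congr 1
  set g := R.map (homOfLE (Fin.zero_le (Fin.succAboveOrderEmb i 0))) with hg
  have hfib : (m.map g.base).toFunctor.obj ((R.obj 0).fiber)
      = (R.obj ((coface i).obj 0)).fiber := hd1 _ _ _ g.fiber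
  have hmor : g = (⟨g.base, eqToHom hfib⟩ :
      Grothendieck.Hom (R.obj 0) (R.obj ((coface i).obj 0))) :=
    groHomExt hd1 hd2 _ _ rfl
  rw [hmor]
  exact (key a g.base ((R.obj 0).fiber) _ hfib (c (coface i ⋙ (R ⋙ Grothendieck.forget m)))).symm
end Main

section Homological
variable {A B D A' B' D' : Type*} [AddCommGroup A] [AddCommGroup B] [AddCommGroup D]
  [AddCommGroup A'] [AddCommGroup B'] [AddCommGroup D']

noncomputable def kerEquiv (f : A →+ B) (f' : A' →+ B') (eA : A ≃+ A') (eB : B ≃+ B')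
    (h : ∀ x, f' (eA x) = eB (f x)) : f.ker ≃+ f'.ker where
  toFun x := ⟨eA ↑x, by
    have hx := AddMonoidHom.mem_ker.mp x.2
    rw [AddMonoidHom.mem_ker, h, hx, map_zero]⟩
  invFun y := ⟨eA.symm ↑y, by
    have hy := AddMonoidHom.mem_ker.mp y.2
    rw [AddMonoidHom.mem_ker]
    apply eB.injective
    rw [← h, AddEquiv.apply_symm_apply, hy, map_zero]⟩
  left_inv x := Subtype.ext (eA.symm_apply_apply ↑x)
  right_inv y := Subtype.ext (eA.apply_symm_apply ↑y)
  map_add' x y := Subtype.ext (map_add eA ↑x ↑y)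

noncomputable def quotEquiv (d0 : A →+ B) (d1 : B →+ D) (d0' : A' →+ B') (d1' : B' →+ D')
    (eA : A ≃+ A') (eB : B ≃+ B') (eD : D ≃+ D')
    (h0 : ∀ x, d0' (eA x) = eB (d0 x)) (h1 : ∀ x, d1' (eB x) = eD (d1 x)) :
    (d1.ker ⧸ d0.range.addSubgroupOf d1.ker)
      ≃+ (d1'.ker ⧸ d0'.range.addSubgroupOf d1'.ker) := by
  refine QuotientAddGroup.congr _ _ (kerEquiv d1 d1' eB eD h1) ?_
  ext y
  simp only [AddSubgroup.mem_map, AddSubgroup.mem_addSubgroupOf, AddMonoidHom.mem_range]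
  constructor
  · rintro ⟨x, ⟨z, hz⟩, hxy⟩
    refine ⟨eA z, ?_⟩
    rw [h0, hz]
    exact congrArg Subtype.val hxy
  · rintro ⟨z, hz⟩
    refine ⟨(kerEquiv d1 d1' eB eD h1).symm y, ⟨eA.symm z, ?_⟩,
      (kerEquiv d1 d1' eB eD h1).apply_symm_apply y⟩
    show d0 (eA.symm z) = eB.symm y
    apply eB.injective
    rw [← h0, AddEquiv.apply_symm_apply, AddEquiv.apply_symm_apply, hz]
end Homological


/-- Let `C` be a small category and `m : C ⥤ Cat` a representation
all of whose values are discrete categories.  For every contravariant functor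
`a` from the Grothendieck construction (semidirect product) `m ⋊ C` to abelian
groups, and every `n ≥ 0`, the cohomology of `m ⋊ C` with coefficients in `a`
is isomorphic to the cohomology of `C` with coefficients in the product functor
`a^m`. -/
theorem stmt15 {C : Type u} [Category.{u} C] (m : C ⥤ Cat.{u, u})
    (hdisc₁ : ∀ (c : C) (X Y : ↑(m.obj c)), (X ⟶ Y) → X = Y)
    (hdisc₂ : ∀ (c : C) (X : ↑(m.obj c)) (φ : X ⟶ X), φ = 𝟙 X)
    (a : CoefSys.{w} (Grothendieck m)) (ha : a.IsFunctorial) (n : ℕ) :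
    Nonempty (catCohomology a n ≃+ catCohomology (prodCoef m a) n) := by
  have comm : ∀ (k : ℕ) (c : Cochain (prodCoef m a) k),
      cochainD a k ((PsiEquiv hdisc₁ hdisc₂ a k) c)
        = (PsiEquiv hdisc₁ hdisc₂ a (k + 1)) (cochainD (prodCoef m a) k c) :=
    fun k c => (Psi_comm hdisc₁ hdisc₂ a k c).symm
  cases n with
  | zero =>
    exact ⟨(kerEquiv (cochainD (prodCoef m a) 0) (cochainD a 0)
      (PsiEquiv hdisc₁ hdisc₂ a 0) (PsiEquiv hdisc₁ hdisc₂ a 1) (comm 0)).symm⟩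
  | succ n =>
    exact ⟨(quotEquiv (cochainD (prodCoef m a) n) (cochainD (prodCoef m a) (n + 1))
      (cochainD a n) (cochainD a (n + 1))
      (PsiEquiv hdisc₁ hdisc₂ a n) (PsiEquiv hdisc₁ hdisc₂ a (n + 1))
      (PsiEquiv hdisc₁ hdisc₂ a (n + 2)) (comm n) (comm (n + 1))).symm⟩
end
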